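/- Let p be an odd prime, n a positive integer, and m ≥ 1. Then: (i) Σ_{h=0}^{m} (−1)^{h−1}·C(m,h)·b_m(2h,0) = −(2n)^m; (ii) Σ_{h=0}^{m} (−1)^{h−1}·C(m,h)·b_{m+1}(2h,0) = (2n)^{m+1}·P_1(m); (iii) Σ_{h=0}^{m} (−1)^{h−1}·C(m,h)·b_{m+2}(2h,0) = −( (2n)^{m+2}·P_2(m) + (2n)^m·m·α_p(3) ). -/

import Mathlib

open Finset

/-- σ₁, the sum-of-divisors function. -/
def sigma1 (k : ℕ) : ℕ := ∑ d ∈ k.divisors, d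

/-- The term σ₁(k/d)/(k/d), taken to be 0 unless d divides k. -/
noncomputable def sigmaTerm (k d : ℕ) : ℚ :=
  if d ∣ k then (sigma1 (k / d) : ℚ) / (k / d) else 0

/-- α_p(k) = σ₁(k)/k − 3σ₁(k/2)/(k/2) + 2σ₁(k/4)/(k/4) + σ₁(k/p)/(k/p)
      − 3σ₁(k/(2p))/(k/(2p)) + 2σ₁(k/(4p))/(k/(4p)). -/
noncomputable def alphaP (p k : ℕ) : ℚ :=
  sigmaTerm k 1 - 3 * sigmaTerm k 2 + 2 * sigmaTerm k 4
    + sigmaTerm k p - 3 * sigmaTerm k (2 * p) + 2 * sigmaTerm k (4 * p)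

/-- The multiplicity j_k of the part k in the partition J. -/
def mult {N : ℕ} (J : N.Partition) (k : ℕ) : ℕ := Multiset.count k J.parts

/-- |J| = Σ_k j_k. -/
def normJ {N : ℕ} (J : N.Partition) : ℕ := Multiset.card J.parts

/-- J_o = Σ_{k odd} j_k. -/
def oddJ {N : ℕ} (J : N.Partition) : ℕ := Multiset.card (J.parts.filter Odd)

/-- J_e = Σ_{k even} j_k. -/
def evenJ {N : ℕ} (J : N.Partition) : ℕ := Multiset.card (J.parts.filter Even)

/-- W_p(J) = Π_{k≥1} α_p(k)^{j_k}/j_k!  (the factors with j_k = 0 are 1). -/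
noncomputable def Wp (p : ℕ) {N : ℕ} (J : N.Partition) : ℚ :=
  ∏ k ∈ J.parts.toFinset, alphaP p k ^ mult J k / (Nat.factorial (mult J k))

/-- b_l(u,v) = Σ_{J ∈ J[l]} (−n)^{|J|} u^{J_o} v^{J_e} W_p(J). -/
noncomputable def bP (p n l : ℕ) (u v : ℚ) : ℚ :=
  ∑ J : l.Partition, (-(n : ℚ)) ^ normJ J * u ^ oddJ J * v ^ evenJ J * Wp p J

/-- P_r(m), defined by P_0(m) = 1, P_r(0) = 0 for r ≥ 1, and
    (r+m)·P_r(m) = m·(P_{r−1}(m) + P_r(m−1)) for r, m ≥ 1. -/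
def Ppoly : ℕ → ℕ → ℚ
  | 0, _ => 1
  | _ + 1, 0 => 0
  | r + 1, m + 1 =>
      ((m : ℚ) + 1) * (Ppoly r (m + 1) + Ppoly (r + 1) m) / ((r : ℚ) + 1 + ((m : ℚ) + 1))


lemma card_le_sum_ms (s : Multiset ℕ) (h : ∀ x ∈ s, 1 ≤ x) : Multiset.card s ≤ s.sum := by
  induction s using Multiset.induction_on with
  | empty => simp
  | cons a t ih =>
    simp only [Multiset.card_cons, Multiset.sum_cons]
    have ha := h a (Multiset.mem_cons_self a t)
    have := ih (fun x hx => h x (Multiset.mem_cons_of_mem hx))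
    omega

lemma odd_sum_parity (s : Multiset ℕ) (h : ∀ x ∈ s, Odd x) : s.sum % 2 = Multiset.card s % 2 := by
  induction s using Multiset.induction_on with
  | empty => simp
  | cons a t ih =>
    simp only [Multiset.card_cons, Multiset.sum_cons]
    obtain ⟨k, hk⟩ := h a (Multiset.mem_cons_self a t)
    have := ih (fun x hx => h x (Multiset.mem_cons_of_mem hx))
    omega

lemma all_ones_of_sum_eq_card (s : Multiset ℕ) (h1 : ∀ x ∈ s, 1 ≤ x)
    (h2 : s.sum = Multiset.card s) : s = Multiset.replicate (Multiset.card s) 1 := by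
  rw [Multiset.eq_replicate]
  refine ⟨rfl, fun b hb => ?_⟩
  by_contra hb1
  have hb2 : 2 ≤ b := by have := h1 b hb; omega
  obtain ⟨t, rfl⟩ := Multiset.exists_cons_of_mem hb
  have := card_le_sum_ms t (fun x hx => h1 x (Multiset.mem_cons_of_mem hx))
  simp only [Multiset.sum_cons, Multiset.card_cons] at h2
  omega

lemma one_three_of_sum_eq_card_add_two (s : Multiset ℕ) (h1 : ∀ x ∈ s, Odd x)
    (h2 : s.sum = Multiset.card s + 2) :
    s = 3 ::ₘ Multiset.replicate (Multiset.card s - 1) 1 := by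
  induction s using Multiset.induction_on with
  | empty => simp at h2
  | cons a t ih =>
    have hodd := h1 a (Multiset.mem_cons_self a t)
    have h1t : ∀ x ∈ t, Odd x := fun x hx => h1 x (Multiset.mem_cons_of_mem hx)
    have h1t' : ∀ x ∈ t, 1 ≤ x := fun x hx => (h1t x hx).pos
    have hct := card_le_sum_ms t h1t'
    simp only [Multiset.sum_cons, Multiset.card_cons] at h2 ⊢
    rcases Nat.lt_or_ge a 3 with ha | ha
    · have ha1 : a = 1 := by obtain ⟨k, hk⟩ := hodd; omega
      subst ha1
      have ht : t.sum = Multiset.card t + 2 := by omega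
      have := ih h1t ht
      rw [this]
      have hcard : 1 ≤ Multiset.card t := by
        by_contra hc
        have : t = 0 := by
          rw [← Multiset.card_eq_zero]; omega
        subst this; simp at ht
      rw [Multiset.cons_swap]
      congr 1
      simp only [Multiset.card_cons, Multiset.card_replicate]
      have : Multiset.card t - 1 + 1 + 1 - 1 = (Multiset.card t - 1) + 1 := by omega
      rw [this, Multiset.replicate_succ]
  -- a ≥ 3 case
    · have ha3 : a = 3 ∧ t.sum = Multiset.card t := by omega
      obtain ⟨rfl, hts⟩ := ha3
      have := all_ones_of_sum_eq_card t h1t' hts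
      rw [this]
      simp


def Ssum (m j : ℕ) : ℚ := ∑ h ∈ Finset.range (m+1), (-1:ℚ)^h * (m.choose h) * (h:ℚ)^j

lemma Ssum_rec (m j : ℕ) :
    Ssum (m+1) (j+1) = -((m:ℚ)+1) * ∑ i ∈ Finset.range (j+1), (j.choose i : ℚ) * Ssum m i := by
  unfold Ssum
  rw [Finset.sum_range_succ']
  simp only [Nat.cast_zero, zero_pow (Nat.succ_ne_zero j), mul_zero, add_zero]
  push_cast
  have key : ∀ g ∈ Finset.range (m+1),
      (-1:ℚ)^(g+1) * (((m+1).choose (g+1) : ℕ) : ℚ) * ((g:ℚ)+1)^(j+1)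
      = ∑ i ∈ Finset.range (j+1),
          -((m:ℚ)+1) * ((j.choose i : ℚ) * ((-1:ℚ)^g * (m.choose g : ℚ) * ((g:ℚ))^i)) := by
    intro g _
    have hc : ((m+1).choose (g+1) : ℚ) * ((g:ℚ)+1) = ((m:ℚ)+1) * (m.choose g : ℚ) := by
      have h1 : ((m+1) * m.choose g : ℕ) = ((m+1).choose (g+1) * (g+1) : ℕ) :=
        Nat.add_one_mul_choose_eq m g
      have := congrArg (fun x : ℕ => (x:ℚ)) h1
      push_cast at this
      linarith
    have hb : ((g:ℚ)+1)^j = ∑ i ∈ Finset.range (j+1), ((g:ℚ))^i * (j.choose i : ℚ) := by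
      simpa using add_pow (g:ℚ) 1 j
    have hs : ∑ i ∈ Finset.range (j+1),
          -((m:ℚ)+1) * ((j.choose i : ℚ) * ((-1:ℚ)^g * (m.choose g : ℚ) * ((g:ℚ))^i))
        = -((m:ℚ)+1) * ((-1:ℚ)^g * (m.choose g : ℚ)) *
            ∑ i ∈ Finset.range (j+1), ((g:ℚ))^i * (j.choose i : ℚ) := by
      rw [Finset.mul_sum]
      exact Finset.sum_congr rfl fun i _ => by ring
    rw [hs, ← hb]
    calc (-1:ℚ)^(g+1) * (((m+1).choose (g+1)) : ℚ) * ((g:ℚ)+1)^(j+1)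
        = (-1:ℚ)^(g+1) * ((((m+1).choose (g+1)) : ℚ) * ((g:ℚ)+1)) * ((g:ℚ)+1)^j := by
          rw [pow_succ ((g:ℚ)+1)]; ring
      _ = (-1:ℚ)^(g+1) * (((m:ℚ)+1) * (m.choose g : ℚ)) * ((g:ℚ)+1)^j := by rw [hc]
      _ = -((m:ℚ)+1) * ((-1:ℚ)^g * (m.choose g : ℚ)) * ((g:ℚ)+1)^j := by
          rw [pow_succ]; ring
  rw [Finset.sum_congr rfl key, Finset.sum_comm]
  simp only [Finset.mul_sum]

lemma Ssum_zero_of_lt : ∀ j m : ℕ, j < m → Ssum m j = 0 := by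
  intro j
  induction j using Nat.strong_induction_on with
  | _ j ih =>
    intro m hm
    match j, m with
    | 0, m =>
      unfold Ssum
      have h0 : (0:ℚ) = (-1 + 1)^m := by rw [neg_add_cancel, zero_pow (by omega : m ≠ 0)]
      rw [show (∑ h ∈ Finset.range (m+1), (-1:ℚ)^h * (m.choose h) * (h:ℚ)^0)
          = ∑ h ∈ Finset.range (m+1), (-1:ℚ)^h * 1^(m-h) * (m.choose h) from
        Finset.sum_congr rfl fun h _ => by rw [pow_zero, one_pow]; ring]
      rw [← add_pow (-1:ℚ) 1 m, ← h0]
    | j+1, m =>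
      obtain ⟨m', rfl⟩ : ∃ m', m = m' + 1 := ⟨m - 1, by omega⟩
      rw [Ssum_rec]
      have : ∀ i ∈ Finset.range (j+1), (j.choose i : ℚ) * Ssum m' i = 0 := by
        intro i hi
        rw [ih i (by simp at hi; omega) m' (by simp at hi; omega), mul_zero]
      rw [Finset.sum_congr rfl this, Finset.sum_const_zero, mul_zero]

lemma Ssum_diag : ∀ m : ℕ, Ssum m m = (-1:ℚ)^m * (Nat.factorial m) := by
  intro m
  induction m with
  | zero =>
    unfold Ssum; norm_num
  | succ m ih =>
    rw [Ssum_rec, Finset.sum_range_succ]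
    have hz : ∀ i ∈ Finset.range m, (m.choose i : ℚ) * Ssum m i = 0 := by
      intro i hi
      rw [Ssum_zero_of_lt i m (by simpa using hi), mul_zero]
    rw [Finset.sum_congr rfl hz, Finset.sum_const_zero, zero_add, Nat.choose_self, ih]
    push_cast [Nat.factorial_succ]
    ring

lemma Ssum_d1 : ∀ m : ℕ, Ssum m (m+1) = (-1:ℚ)^m * (Nat.factorial m) * (m * (m+1) / 2) := by
  intro m
  induction m with
  | zero => unfold Ssum; norm_num
  | succ m ih =>
    rw [Ssum_rec]
    rw [Finset.sum_range_succ, Finset.sum_range_succ]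
    have hz : ∀ i ∈ Finset.range m, ((m+1).choose i : ℚ) * Ssum m i = 0 := by
      intro i hi
      rw [Ssum_zero_of_lt i m (by simpa using hi), mul_zero]
    rw [Finset.sum_congr rfl hz, Finset.sum_const_zero, zero_add, Nat.choose_self,
      Nat.choose_succ_self_right, Ssum_diag, ih]
    push_cast [Nat.factorial_succ]
    ring

lemma Ssum_d2 : ∀ m : ℕ,
    Ssum m (m+2) = (-1:ℚ)^m * (Nat.factorial m) * (m * (m+1) * (m+2) * (3*m+1) / 24) := by
  intro m
  induction m with
  | zero => unfold Ssum; norm_num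
  | succ m ih =>
    have hrec := Ssum_rec m (m+2)
    rw [show m + 1 + 2 = m + 2 + 1 from rfl, hrec]
    rw [Finset.sum_range_succ, Finset.sum_range_succ, Finset.sum_range_succ]
    have hz : ∀ i ∈ Finset.range m, ((m+2).choose i : ℚ) * Ssum m i = 0 := by
      intro i hi
      rw [Ssum_zero_of_lt i m (by simpa using hi), mul_zero]
    have hc2 : (((m+2).choose m : ℕ) : ℚ) = (m+1) * (m+2) / 2 := by
      have h1 : (m+2).choose m = (m+2).choose 2 := by
        have h := Nat.choose_symm (by omega : 2 ≤ m + 2)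
        rw [show m + 2 - 2 = m by omega] at h
        exact h
      have h2 : (m+2).choose 2 * 2 = (m+2) * (m+1) := by
        rw [Nat.choose_two_right]
        have : 2 ∣ (m+2) * (m+2-1) := (Nat.even_mul_pred_self (m+2)).two_dvd
        obtain ⟨c, hc⟩ := this
        have h3 : m + 2 - 1 = m + 1 := by omega
        rw [h3] at hc ⊢
        omega
      have := congrArg (fun x : ℕ => (x:ℚ)) h2
      push_cast [h1] at this ⊢
      linarith
    have hc1 : (((m+2).choose (m+1) : ℕ) : ℚ) = (m+2) := by
      rw [Nat.choose_succ_self_right]; push_cast; ring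
    rw [Finset.sum_congr rfl hz, Finset.sum_const_zero, zero_add, Nat.choose_self,
      hc1, Ssum_diag, Ssum_d1, ih, hc2]
    push_cast [Nat.factorial_succ]
    ring

lemma Ppoly_one (m : ℕ) : Ppoly 1 m = (m:ℚ) / 2 := by
  induction m with
  | zero => simp [Ppoly]
  | succ m ih =>
    rw [show (1:ℕ) = 0 + 1 from rfl, Ppoly, ih]
    simp only [Ppoly]
    push_cast
    have h2 : ((0:ℚ) + 1 + ((m:ℚ) + 1)) ≠ 0 := by positivity
    field_simp
    ring

lemma Ppoly_two (m : ℕ) : Ppoly 2 m = (m:ℚ) * (3*m+1) / 24 := by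
  induction m with
  | zero => simp [Ppoly]
  | succ m ih =>
    rw [show (2:ℕ) = 1 + 1 from rfl, Ppoly, ih, Ppoly_one]
    push_cast
    have h2 : ((1:ℚ) + 1 + ((m:ℚ) + 1)) ≠ 0 := by positivity
    field_simp
    ring

lemma sigma1_one : sigma1 1 = 1 := by simp [sigma1]

lemma sigmaTerm_not_dvd {k d : ℕ} (h : ¬ d ∣ k) : sigmaTerm k d = 0 := by
  simp [sigmaTerm, h]

lemma alphaP_one (p : ℕ) (hp : p.Prime) : alphaP p 1 = 1 := by
  have h2 : ¬ (2 ∣ 1) := by omega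
  have h4 : ¬ (4 ∣ 1) := by omega
  have hp1 : ¬ (p ∣ 1) := by
    rw [Nat.dvd_one]; exact hp.ne_one
  have hp2 : ¬ (2 * p ∣ 1) := by
    rw [Nat.dvd_one]; have := hp.two_le; omega
  have hp4 : ¬ (4 * p ∣ 1) := by
    rw [Nat.dvd_one]; have := hp.two_le; omega
  unfold alphaP
  rw [sigmaTerm_not_dvd h2, sigmaTerm_not_dvd h4, sigmaTerm_not_dvd hp1,
    sigmaTerm_not_dvd hp2, sigmaTerm_not_dvd hp4]
  simp [sigmaTerm, sigma1]

/-- The all-ones partition. -/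
def onesPart (l : ℕ) : l.Partition :=
  ⟨Multiset.replicate l 1, by
    intro i hi
    rw [Multiset.eq_of_mem_replicate hi]
    omega, by simp⟩

/-- The partition 3 + 1 + ... + 1. -/
def threePart (t : ℕ) : (t+3).Partition :=
  ⟨3 ::ₘ Multiset.replicate t 1, by
    intro i hi
    rcases Multiset.mem_cons.mp hi with h | h
    · omega
    · rw [Multiset.eq_of_mem_replicate h]; omega,
    by simp [Multiset.sum_cons]; omega⟩

lemma onesPart_parts (l : ℕ) : (onesPart l).parts = Multiset.replicate l 1 := rfl

lemma threePart_parts (t : ℕ) : (threePart t).parts = 3 ::ₘ Multiset.replicate t 1 := rfl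

lemma normJ_ones (l : ℕ) : normJ (onesPart l) = l := by
  simp [normJ, onesPart]

lemma oddJ_ones (l : ℕ) : oddJ (onesPart l) = l := by
  unfold oddJ
  rw [onesPart_parts, Multiset.filter_eq_self.mpr, Multiset.card_replicate]
  intro a ha
  rw [Multiset.eq_of_mem_replicate ha]
  exact odd_one

lemma evenJ_ones (l : ℕ) : evenJ (onesPart l) = 0 := by
  unfold evenJ
  rw [onesPart_parts, Multiset.filter_eq_nil.mpr, Multiset.card_zero]
  intro a ha
  rw [Multiset.eq_of_mem_replicate ha]
  exact (Nat.not_even_iff_odd.mpr odd_one)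

lemma normJ_three (t : ℕ) : normJ (threePart t) = t + 1 := by
  simp [normJ, threePart]

lemma oddJ_three (t : ℕ) : oddJ (threePart t) = t + 1 := by
  unfold oddJ
  rw [threePart_parts, Multiset.filter_eq_self.mpr]
  · simp
  · intro a ha
    rcases Multiset.mem_cons.mp ha with h | h
    · rw [h]; exact ⟨1, by ring⟩
    · rw [Multiset.eq_of_mem_replicate h]; exact odd_one

lemma evenJ_three (t : ℕ) : evenJ (threePart t) = 0 := by
  unfold evenJ
  rw [threePart_parts, Multiset.filter_eq_nil.mpr, Multiset.card_zero]
  intro a ha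
  rcases Multiset.mem_cons.mp ha with h | h
  · rw [h]; rw [Nat.not_even_iff_odd]; exact ⟨1, by ring⟩
  · rw [Multiset.eq_of_mem_replicate h, Nat.not_even_iff_odd]; exact odd_one

lemma Wp_ones (p : ℕ) (hp : p.Prime) (l : ℕ) :
    Wp p (onesPart l) = 1 / (Nat.factorial l : ℚ) := by
  unfold Wp
  rcases Nat.eq_zero_or_pos l with rfl | hl
  · simp [onesPart]
  · rw [show (onesPart l).parts.toFinset = {1} by
      rw [onesPart_parts, Multiset.toFinset_replicate, if_neg (by omega)]]
    rw [Finset.prod_singleton]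
    have hc : mult (onesPart l) 1 = l := by
      unfold mult
      rw [onesPart_parts, Multiset.count_replicate, if_pos rfl]
    rw [hc, alphaP_one p hp, one_pow]

lemma Wp_three (p : ℕ) (hp : p.Prime) (t : ℕ) :
    Wp p (threePart t) = alphaP p 3 / (Nat.factorial t : ℚ) := by
  unfold Wp
  have hm3 : mult (threePart t) 3 = 1 := by
    unfold mult
    rw [threePart_parts, Multiset.count_cons_self, Multiset.count_replicate,
      if_neg (by omega)]
  have hm1 : mult (threePart t) 1 = t := by
    unfold mult
    rw [threePart_parts, Multiset.count_cons_of_ne (by omega), Multiset.count_replicate,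
      if_pos rfl]
  rcases Nat.eq_zero_or_pos t with rfl | ht
  · rw [show (threePart 0).parts.toFinset = {3} by
      rw [threePart_parts, Multiset.toFinset_cons, Multiset.toFinset_replicate, if_pos rfl]
      rfl]
    rw [Finset.prod_singleton, hm3]
    norm_num
  · rw [show (threePart t).parts.toFinset = insert 3 {1} by
      rw [threePart_parts, Multiset.toFinset_cons, Multiset.toFinset_replicate,
        if_neg (by omega)]]
    rw [Finset.prod_insert (by simp), Finset.prod_singleton, hm3, hm1,
      alphaP_one p hp, one_pow]
    rw [pow_one, div_eq_mul_inv]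
    norm_num
    rw [div_eq_mul_inv]

lemma odd_parts_of_evenJ_zero {l : ℕ} (J : l.Partition) (he : evenJ J = 0) :
    (∀ x ∈ J.parts, Odd x) ∧ oddJ J = Multiset.card J.parts := by
  unfold evenJ at he
  rw [Multiset.card_eq_zero] at he
  have hodd : ∀ x ∈ J.parts, Odd x := by
    intro x hx
    rcases Nat.even_or_odd x with hev | hod
    · exfalso
      have : x ∈ Multiset.filter Even J.parts := Multiset.mem_filter.mpr ⟨hx, hev⟩
      rw [he] at this
      exact absurd this (Multiset.notMem_zero x)
    · exact hod
  refine ⟨hodd, ?_⟩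
  unfold oddJ
  rw [Multiset.filter_eq_self.mpr hodd]

lemma swap_sum (p n m l : ℕ) :
    ∑ h ∈ Finset.range (m+1), (-1:ℚ)^((h:ℤ)-1) * (m.choose h) * bP p n l (2*(h:ℚ)) 0
    = ∑ J : l.Partition, (-(n:ℚ))^(normJ J) * (0:ℚ)^(evenJ J) * Wp p J * (2:ℚ)^(oddJ J)
        * (-(Ssum m (oddJ J))) := by
  have hsign : ∀ h : ℕ, (-1:ℚ)^((h:ℤ)-1) = -(-1:ℚ)^h := by
    intro h
    rw [zpow_sub₀ (by norm_num : (-1:ℚ) ≠ 0), zpow_one, zpow_natCast, div_neg, div_one]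
  unfold bP
  simp only [Finset.mul_sum]
  rw [Finset.sum_comm]
  refine Finset.sum_congr rfl fun J _ => ?_
  unfold Ssum
  rw [← Finset.sum_neg_distrib, Finset.mul_sum]
  refine Finset.sum_congr rfl fun h _ => ?_
  rw [hsign h, mul_pow]
  ring

lemma F_vanish (n m : ℕ) (l : ℕ) (J : l.Partition) (W : ℚ)
    (h : ¬ (evenJ J = 0 ∧ m ≤ oddJ J)) :
    (-(n:ℚ))^(normJ J) * (0:ℚ)^(evenJ J) * W * (2:ℚ)^(oddJ J) * (-(Ssum m (oddJ J))) = 0 := by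
  by_cases he : evenJ J = 0
  · have ho : oddJ J < m := by
      rcases Nat.lt_or_ge (oddJ J) m with h' | h'
      · exact h'
      · exact absurd ⟨he, h'⟩ h
    rw [Ssum_zero_of_lt _ _ ho, neg_zero, mul_zero]
  · rw [zero_pow he]; ring

lemma classify_base {l : ℕ} (J : l.Partition) (he : evenJ J = 0) :
    Multiset.card J.parts ≤ l ∧ l % 2 = Multiset.card J.parts % 2
      ∧ oddJ J = Multiset.card J.parts ∧ J.parts.sum = l ∧ (∀ x ∈ J.parts, 1 ≤ x)
      ∧ (∀ x ∈ J.parts, Odd x) := by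
  obtain ⟨hodd, hoJ⟩ := odd_parts_of_evenJ_zero J he
  have h1 : ∀ x ∈ J.parts, 1 ≤ x := fun x hx => J.parts_pos hx
  have hsum : J.parts.sum = l := J.parts_sum
  refine ⟨?_, ?_, hoJ, hsum, h1, hodd⟩
  · have := card_le_sum_ms _ h1; omega
  · have := odd_sum_parity _ hodd; omega

theorem first_three_components (p : ℕ) (hp : p.Prime) (hpodd : Odd p)
    (n : ℕ) (hn : 0 < n) (m : ℕ) (hm : 1 ≤ m) :
    (∑ h ∈ Finset.range (m + 1),
        (-1 : ℚ) ^ ((h : ℤ) - 1) * (m.choose h) * bP p n m (2 * (h : ℚ)) 0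
      = -(2 * (n : ℚ)) ^ m)
    ∧ (∑ h ∈ Finset.range (m + 1),
        (-1 : ℚ) ^ ((h : ℤ) - 1) * (m.choose h) * bP p n (m + 1) (2 * (h : ℚ)) 0
      = (2 * (n : ℚ)) ^ (m + 1) * Ppoly 1 m)
    ∧ (∑ h ∈ Finset.range (m + 1),
        (-1 : ℚ) ^ ((h : ℤ) - 1) * (m.choose h) * bP p n (m + 2) (2 * (h : ℚ)) 0
      = -((2 * (n : ℚ)) ^ (m + 2) * Ppoly 2 m + (2 * (n : ℚ)) ^ m * m * alphaP p 3)) := by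
  have hf : ∀ k : ℕ, (Nat.factorial k : ℚ) ≠ 0 :=
    fun k => Nat.cast_ne_zero.mpr (Nat.factorial_ne_zero k)
  have hneg : ∀ k : ℕ, ((-1:ℚ)^k) * ((-1:ℚ)^k) = 1 := by
    intro k
    rw [← pow_add, ← two_mul, pow_mul]
    norm_num
  refine ⟨?_, ?_, ?_⟩
  · -- part (i), l = m
    rw [swap_sum]
    rw [← Finset.sum_subset (Finset.subset_univ {onesPart m})]
    · rw [Finset.sum_singleton, normJ_ones, evenJ_ones, oddJ_ones, Wp_ones p hp,
        Ssum_diag, pow_zero]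
      have h1 := hneg m
      have h2 : (1:ℚ)/(Nat.factorial m : ℚ) * (Nat.factorial m : ℚ) = 1 := by
        field_simp
      calc (-(n:ℚ))^m * 1 * (1/(Nat.factorial m : ℚ)) * 2^m
            * (-((-1:ℚ)^m * (Nat.factorial m : ℚ)))
          = -(((-1:ℚ)^m*(-1:ℚ)^m) * ((1/(Nat.factorial m:ℚ))*(Nat.factorial m:ℚ))
              * ((n:ℚ)^m * 2^m)) := by
            rw [show (-(n:ℚ))^m = (-1:ℚ)^m * (n:ℚ)^m from neg_pow (n:ℚ) m]
            ring
        _ = -(2*(n:ℚ))^m := by rw [h1, h2, mul_pow]; ring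
    · intro J _ hJ
      rw [Finset.mem_singleton] at hJ
      refine F_vanish n m m J _ ?_
      rintro ⟨he, ho⟩
      obtain ⟨hc1, hc2, hc3, hc4, hc5, hc6⟩ := classify_base J he
      have hcard : Multiset.card J.parts = m := by omega
      have := all_ones_of_sum_eq_card J.parts hc5 (by omega)
      exact hJ (by ext1; rw [this, hcard, onesPart_parts])
  · -- part (ii), l = m + 1
    rw [swap_sum]
    rw [← Finset.sum_subset (Finset.subset_univ {onesPart (m+1)})]
    · rw [Finset.sum_singleton, normJ_ones, evenJ_ones, oddJ_ones, Wp_ones p hp,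
        Ssum_d1, pow_zero, Ppoly_one]
      have hF1 : (Nat.factorial (m+1) : ℚ) = ((m:ℚ)+1)*(Nat.factorial m : ℚ) := by
        rw [Nat.factorial_succ]; push_cast; ring
      have hm1 : ((m:ℚ)+1) ≠ 0 := by positivity
      rw [hF1, show (-(n:ℚ)) = -1 * (n:ℚ) by ring, mul_pow, mul_pow]
      rcases Nat.even_or_odd m with hpar | hpar
      · rw [hpar.neg_one_pow, hpar.add_one.neg_one_pow]
        field_simp [hf m]
      · rw [hpar.neg_one_pow, hpar.add_one.neg_one_pow]
        field_simp [hf m]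
    · intro J _ hJ
      rw [Finset.mem_singleton] at hJ
      refine F_vanish n m (m+1) J _ ?_
      rintro ⟨he, ho⟩
      obtain ⟨hc1, hc2, hc3, hc4, hc5, hc6⟩ := classify_base J he
      have hcard : Multiset.card J.parts = m + 1 := by omega
      have := all_ones_of_sum_eq_card J.parts hc5 (by omega)
      exact hJ (by ext1; rw [this, hcard, onesPart_parts])
  · -- part (iii), l = m + 2
    obtain ⟨m', rfl⟩ : ∃ m', m = m' + 1 := ⟨m - 1, by omega⟩
    have hl : m' + 1 + 2 = m' + 3 := by omega
    rw [swap_sum]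
    have hne : onesPart (m'+1+2) ≠ (threePart m' : (m'+1+2).Partition) := by
      intro h
      have := congrArg normJ h
      rw [normJ_ones, normJ_three] at this
      omega
    rw [← Finset.sum_subset (Finset.subset_univ
      {onesPart (m'+1+2), (threePart m' : (m'+1+2).Partition)})]
    · rw [Finset.sum_pair hne, normJ_ones, evenJ_ones, oddJ_ones, Wp_ones p hp,
        normJ_three, evenJ_three, oddJ_three, Wp_three p hp, pow_zero,
        Ssum_d2, Ssum_diag, Ppoly_two]
      have hF3 : (Nat.factorial (m'+1+2) : ℚ)
          = ((m':ℚ)+3)*((m':ℚ)+2)*((m':ℚ)+1)*(Nat.factorial m' : ℚ) := by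
        rw [show m'+1+2 = ((m'+1)+1)+1 from rfl, Nat.factorial_succ, Nat.factorial_succ,
          Nat.factorial_succ]
        push_cast; ring
      have hF1 : (Nat.factorial (m'+1) : ℚ) = ((m':ℚ)+1)*(Nat.factorial m' : ℚ) := by
        rw [Nat.factorial_succ]; push_cast; ring
      have h1 : ((m':ℚ)+1) ≠ 0 := by positivity
      have h2 : ((m':ℚ)+2) ≠ 0 := by positivity
      have h3 : ((m':ℚ)+3) ≠ 0 := by positivity
      rw [hF3, hF1, show (-(n:ℚ)) = -1 * (n:ℚ) by ring, mul_pow, mul_pow, mul_pow, mul_pow]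
      push_cast
      rcases Nat.even_or_odd (m'+1) with hpar | hpar
      · have hpar2 : Even (m'+1+2) := by
          rcases hpar with ⟨k, hk⟩; exact ⟨k+1, by omega⟩
        rw [hpar.neg_one_pow, hpar2.neg_one_pow]
        field_simp [hf m']
        ring
      · have hpar2 : Odd (m'+1+2) := by
          rcases hpar with ⟨k, hk⟩; exact ⟨k+1, by omega⟩
        rw [hpar.neg_one_pow, hpar2.neg_one_pow]
        field_simp [hf m']
        ring
    · intro J _ hJ
      rw [Finset.mem_insert, Finset.mem_singleton] at hJ
      push_neg at hJ
      obtain ⟨hJ0, hJ1⟩ := hJ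
      refine F_vanish n (m'+1) (m'+1+2) J _ ?_
      rintro ⟨he, ho⟩
      obtain ⟨hc1, hc2, hc3, hc4, hc5, hc6⟩ := classify_base J he
      rcases (by omega : Multiset.card J.parts = m' + 3 ∨ Multiset.card J.parts = m' + 1)
        with hcard | hcard
      · have := all_ones_of_sum_eq_card J.parts hc5 (by omega)
        exact hJ0 (by ext1; rw [this, hcard, onesPart_parts])
      · have := one_three_of_sum_eq_card_add_two J.parts hc6 (by omega)
        refine hJ1 ?_
        ext1
        rw [this, hcard, threePart_parts]
        norm_num
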